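/- (Proposition 1, general case.) Let departure times d₁ < d₂ < ... < d_H in {a,...,T}, demands L^{d_k} > 0, base load ℓ⁰ on slots {a,...,T}, and f convex increasing differentiable. Define recursively ℓ^{d_k} as the water-filling solution for demand L^{d_k} on slots {a,...,d_k} against the base load ℓ⁰ + ∑_{j<k} ℓ^{d_j}. Then the collection (ℓ^{d_k})_{k=1}^H minimizes ∑_{t=a}^T f(ℓ⁰_t + ∑_k ℓ^{d_k}_t) over all collections of profiles where each ℓ^{d_k} is nonnegative, supported on {a,...,d_k}, and sums to L^{d_k}. -/
import Mathlib

open Set Filter Topology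

/-- Gradient inequality for convex differentiable functions on ℝ. -/
lemma grad_ineq {f : ℝ → ℝ} (hconv : ConvexOn ℝ Set.univ f) (hdiff : Differentiable ℝ f)
    (x y : ℝ) : deriv f x * (y - x) ≤ f y - f x := by
  rcases lt_trichotomy x y with h | rfl | h
  · have h1 : deriv f x ≤ slope f x y :=
      hconv.deriv_le_slope (Set.mem_univ x) (Set.mem_univ y) h (hdiff x)
    rw [slope_def_field] at h1
    have hyx : (0:ℝ) < y - x := by linarith
    have := mul_le_mul_of_nonneg_right h1 hyx.le
    rwa [div_mul_cancel₀ _ hyx.ne'] at this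
  · simp
  · have h1 : slope f y x ≤ deriv f x :=
      hconv.slope_le_deriv (Set.mem_univ y) (Set.mem_univ x) h (hdiff x)
    rw [slope_def_field] at h1
    have hxy : (0:ℝ) < x - y := by linarith
    have := mul_le_mul_of_nonneg_right h1 hxy.le
    rw [div_mul_cancel₀ _ hxy.ne'] at this
    nlinarith

/-- Exchange lemma: if moving ε mass from A to B never helps, then deriv f A ≤ deriv f B. -/
lemma exch_aux {f : ℝ → ℝ} (hdiff : Differentiable ℝ f)
    {A B c : ℝ} (hc : 0 < c)
    (h : ∀ ε : ℝ, 0 < ε → ε ≤ c → f A + f B ≤ f (A - ε) + f (B + ε)) :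
    deriv f A ≤ deriv f B := by
  have hA0 : Tendsto (slope f A) (𝓝[≠] A) (𝓝 (deriv f A)) :=
    hasDerivAt_iff_tendsto_slope.mp (hdiff A).hasDerivAt
  have hB0 : Tendsto (slope f B) (𝓝[≠] B) (𝓝 (deriv f B)) :=
    hasDerivAt_iff_tendsto_slope.mp (hdiff B).hasDerivAt
  have hmapA : Tendsto (fun ε : ℝ => A - ε) (𝓝[>] (0:ℝ)) (𝓝[≠] A) := by
    apply tendsto_nhdsWithin_of_tendsto_nhds_of_eventually_within
    · have : Tendsto (fun ε : ℝ => A - ε) (𝓝 (0:ℝ)) (𝓝 (A - 0)) :=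
        tendsto_const_nhds.sub tendsto_id
      simpa using this.mono_left nhdsWithin_le_nhds
    · filter_upwards [self_mem_nhdsWithin] with ε (hε : (0:ℝ) < ε)
      simp only [Set.mem_compl_iff, Set.mem_singleton_iff]
      intro hh; nlinarith [sub_eq_self.mp hh]
  have hmapB : Tendsto (fun ε : ℝ => B + ε) (𝓝[>] (0:ℝ)) (𝓝[≠] B) := by
    apply tendsto_nhdsWithin_of_tendsto_nhds_of_eventually_within
    · have : Tendsto (fun ε : ℝ => B + ε) (𝓝 (0:ℝ)) (𝓝 (B + 0)) :=
        tendsto_const_nhds.add tendsto_id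
      simpa using this.mono_left nhdsWithin_le_nhds
    · filter_upwards [self_mem_nhdsWithin] with ε (hε : (0:ℝ) < ε)
      simp only [Set.mem_compl_iff, Set.mem_singleton_iff]
      intro hh; nlinarith [add_eq_left.mp hh]
  have hA : Tendsto (fun ε : ℝ => slope f A (A - ε)) (𝓝[>] (0:ℝ)) (𝓝 (deriv f A)) :=
    hA0.comp hmapA
  have hB : Tendsto (fun ε : ℝ => slope f B (B + ε)) (𝓝[>] (0:ℝ)) (𝓝 (deriv f B)) :=
    hB0.comp hmapB
  refine le_of_tendsto_of_tendsto hA hB ?_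
  filter_upwards [Ioc_mem_nhdsGT hc] with ε hε
  obtain ⟨hε0, hεc⟩ := hε
  have hkey := h ε hε0 hεc
  show slope f A (A - ε) ≤ slope f B (B + ε)
  rw [slope_def_field, slope_def_field]
  have h1 : A - ε - A = -ε := by ring
  have h2 : B + ε - B = ε := by ring
  rw [h1, h2]
  have : (f (A - ε) - f A) / (-ε) = (f A - f (A - ε)) / ε := by
    rw [div_neg, neg_div']; ring_nf
  rw [this]
  exact (div_le_div_iff_of_pos_right hε0).mpr (by linarith)

/-- Proposition 1, general case: sequential water filling ordered by departure
time solves the nested multi-class scheduling problem. -/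
theorem stmt7 (a T H : ℕ) (ha : 1 ≤ a)
    (d : Fin H → ℕ) (hd_mono : StrictMono d)
    (hd_lb : ∀ k, a ≤ d k) (hd_ub : ∀ k, d k ≤ T)
    (f : ℝ → ℝ) (hf_mono : StrictMono f) (hf_conv : ConvexOn ℝ Set.univ f)
    (hf_diff : Differentiable ℝ f)
    (ℓ0 : ℕ → ℝ) (L : Fin H → ℝ) (hL : ∀ k, 0 < L k)
    (ℓ : Fin H → ℕ → ℝ)
    (hpos : ∀ k t, 0 ≤ ℓ k t)
    (hsupp : ∀ k t, t ∉ Finset.Icc a (d k) → ℓ k t = 0)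
    (hsum : ∀ k, ∑ t ∈ Finset.Icc a (d k), ℓ k t = L k)
    (hopt : ∀ k : Fin H, ∀ x : ℕ → ℝ,
      (∀ t, 0 ≤ x t) → (∀ t, t ∉ Finset.Icc a (d k) → x t = 0) →
      (∑ t ∈ Finset.Icc a (d k), x t = L k) →
      ∑ t ∈ Finset.Icc a (d k),
          f (ℓ0 t + (∑ j ∈ Finset.univ.filter (fun j => j < k), ℓ j t) + ℓ k t) ≤
        ∑ t ∈ Finset.Icc a (d k),
          f (ℓ0 t + (∑ j ∈ Finset.univ.filter (fun j => j < k), ℓ j t) + x t)) :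
    ∀ m : Fin H → ℕ → ℝ,
      (∀ k t, 0 ≤ m k t) →
      (∀ k t, t ∉ Finset.Icc a (d k) → m k t = 0) →
      (∀ k, ∑ t ∈ Finset.Icc a (d k), m k t = L k) →
      ∑ t ∈ Finset.Icc a T, f (ℓ0 t + ∑ k, ℓ k t) ≤
        ∑ t ∈ Finset.Icc a T, f (ℓ0 t + ∑ k, m k t) := by
  intro m hmpos hmsupp hmsum
  -- cumulative loads
  set g : ℝ → ℝ := deriv f with hg
  set S : ℕ → ℕ → ℝ :=
    fun n t => ℓ0 t + ∑ j ∈ Finset.univ.filter (fun j : Fin H => (j : ℕ) < n), ℓ j t with hS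
  have gmono : Monotone g := by
    have := hf_conv.monotoneOn_deriv (fun x _ => hf_diff x)
    exact monotoneOn_univ.mp this
  -- S is monotone in n
  have Smono : ∀ t : ℕ, Monotone (fun n => S n t) := by
    intro t n n' hnn'
    simp only [hS]
    have : (Finset.univ.filter (fun j : Fin H => (j : ℕ) < n)) ⊆
        (Finset.univ.filter (fun j : Fin H => (j : ℕ) < n')) := by
      intro j hj
      simp only [Finset.mem_filter, Finset.mem_univ, true_and] at hj ⊢
      omega
    have := Finset.sum_le_sum_of_subset_of_nonneg this
      (fun j _ _ => hpos j t)
    linarith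
  -- S H is the total load
  have SHtot : ∀ t : ℕ, S H t = ℓ0 t + ∑ k, ℓ k t := by
    intro t
    simp only [hS]
    congr 1
    apply Finset.sum_congr _ (fun _ _ => rfl)
    apply Finset.filter_true_of_mem
    intro j _
    exact j.isLt
  -- successor step
  have Ssucc : ∀ (j : Fin H) (t : ℕ), S ((j : ℕ) + 1) t = S (j : ℕ) t + ℓ j t := by
    intro j t
    simp only [hS]
    have hins : (Finset.univ.filter (fun i : Fin H => (i : ℕ) < (j : ℕ) + 1)) =
        insert j (Finset.univ.filter (fun i : Fin H => (i : ℕ) < (j : ℕ))) := by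
      ext i
      simp only [Finset.mem_filter, Finset.mem_univ, true_and, Finset.mem_insert]
      constructor
      · intro hi
        rcases Nat.lt_succ_iff_lt_or_eq.mp hi with h | h
        · exact Or.inr h
        · exact Or.inl (Fin.ext h)
      · rintro (rfl | h)
        · omega
        · omega
    rw [hins, Finset.sum_insert (by simp)]
    ring
  -- tail-vanishing: if ℓ j t = 0 for all j with n ≤ j, then S H t = S n t
  have Stail : ∀ (t : ℕ) (n : ℕ), (∀ j : Fin H, n ≤ (j : ℕ) → ℓ j t = 0) → S H t = S n t := by
    intro t n hzero
    simp only [hS]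
    congr 1
    symm
    apply Finset.sum_subset
    · intro j hj
      simp only [Finset.mem_filter, Finset.mem_univ, true_and] at hj ⊢
      exact j.isLt
    · intro j _ hj
      simp only [Finset.mem_filter, Finset.mem_univ, true_and] at hj
      exact hzero j (by omega)
  -- base load at stage k equals S k
  have bstage : ∀ (k : Fin H) (t : ℕ),
      ℓ0 t + (∑ j ∈ Finset.univ.filter (fun j => j < k), ℓ j t) = S (k : ℕ) t := by
    intro k t
    have hfe : Finset.univ.filter (fun j : Fin H => j < k) =
        Finset.univ.filter (fun j : Fin H => (j : ℕ) < (k : ℕ)) := by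
      apply Finset.filter_congr
      intro j _
      exact Fin.lt_def
    rw [hfe]
  -- exchange property at each stage
  have exch : ∀ (k : Fin H) (s t : ℕ), s ∈ Finset.Icc a (d k) → t ∈ Finset.Icc a (d k) →
      0 < ℓ k s → g (S ((k : ℕ) + 1) s) ≤ g (S ((k : ℕ) + 1) t) := by
    intro k s t hs ht hks
    rcases eq_or_ne s t with rfl | hst
    · exact le_refl _
    apply exch_aux hf_diff hks
    intro ε hε0 hεc
    set x : ℕ → ℝ := fun r => ℓ k r + (if r = t then ε else 0) - (if r = s then ε else 0) with hx
    have hxs : x s = ℓ k s - ε := by simp [hx, if_neg hst]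
    have hxt : x t = ℓ k t + ε := by simp [hx, if_neg (Ne.symm hst)]
    have hxo : ∀ r, r ≠ s → r ≠ t → x r = ℓ k r := by
      intro r h1 h2; simp [hx, if_neg h1, if_neg h2]
    have hxnonneg : ∀ r, 0 ≤ x r := by
      intro r
      rcases eq_or_ne r s with rfl | h1
      · rw [hxs]; linarith
      rcases eq_or_ne r t with rfl | h2
      · rw [hxt]; have := hpos k r; linarith
      · rw [hxo r h1 h2]; exact hpos k r
    have hxsupp : ∀ r, r ∉ Finset.Icc a (d k) → x r = 0 := by
      intro r hr
      have h1 : r ≠ s := fun h => hr (h ▸ hs)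
      have h2 : r ≠ t := fun h => hr (h ▸ ht)
      rw [hxo r h1 h2]
      exact hsupp k r hr
    have hxsum : ∑ r ∈ Finset.Icc a (d k), x r = L k := by
      simp only [hx]
      rw [Finset.sum_sub_distrib, Finset.sum_add_distrib]
      rw [Finset.sum_ite_eq' (Finset.Icc a (d k)) t (fun _ => ε)]
      rw [Finset.sum_ite_eq' (Finset.Icc a (d k)) s (fun _ => ε)]
      rw [if_pos ht, if_pos hs, hsum k]
      ring
    have hineq := hopt k x hxnonneg hxsupp hxsum
    simp only [bstage] at hineq
    -- difference function
    set φ : ℕ → ℝ := fun r => f (S (k : ℕ) r + x r) - f (S (k : ℕ) r + ℓ k r) with hφ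
    have hφzero : ∀ r ∈ Finset.Icc a (d k), r ∉ ({s, t} : Finset ℕ) → φ r = 0 := by
      intro r _ hr
      simp only [Finset.mem_insert, Finset.mem_singleton, not_or] at hr
      simp [hφ, hxo r hr.1 hr.2]
    have hpairsub : ({s, t} : Finset ℕ) ⊆ Finset.Icc a (d k) := by
      intro r hr
      simp only [Finset.mem_insert, Finset.mem_singleton] at hr
      rcases hr with rfl | rfl
      · exact hs
      · exact ht
    have hsum0 : 0 ≤ ∑ r ∈ Finset.Icc a (d k), φ r := by
      have : ∑ r ∈ Finset.Icc a (d k), φ r =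
          (∑ r ∈ Finset.Icc a (d k), f (S (k : ℕ) r + x r)) -
          ∑ r ∈ Finset.Icc a (d k), f (S (k : ℕ) r + ℓ k r) := by
        rw [← Finset.sum_sub_distrib]
      rw [this]
      linarith
    have hpair : ∑ r ∈ Finset.Icc a (d k), φ r = φ s + φ t := by
      rw [← Finset.sum_subset hpairsub hφzero]
      exact Finset.sum_pair hst
    have hφs : φ s = f (S ((k : ℕ) + 1) s - ε) - f (S ((k : ℕ) + 1) s) := by
      simp only [hφ, hxs, Ssucc]
      ring_nf
    have hφt : φ t = f (S ((k : ℕ) + 1) t + ε) - f (S ((k : ℕ) + 1) t) := by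
      simp only [hφ, hxt, Ssucc]
      ring_nf
    rw [hpair, hφs, hφt] at hsum0
    linarith
  -- core lemma: deriv at final load is minimal over the window on the support
  have core : ∀ (k : Fin H) (t t' : ℕ), t ∈ Finset.Icc a (d k) → 0 < ℓ k t' →
      g (S H t') ≤ g (S H t) := by
    intro k t t' htmem hkt'
    have ht'mem : t' ∈ Finset.Icc a (d k) := by
      by_contra h
      rw [hsupp k t' h] at hkt'
      exact lt_irrefl _ hkt'
    set Jset := Finset.univ.filter (fun j : Fin H => 0 < ℓ j t') with hJ
    have hkJ : k ∈ Jset := by simp [hJ, hkt']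
    have hne : Jset.Nonempty := ⟨k, hkJ⟩
    set j' := Jset.max' hne with hj'
    have hj'mem : j' ∈ Jset := Jset.max'_mem hne
    have hj'pos : 0 < ℓ j' t' := by
      have := hj'mem
      simp only [hJ, Finset.mem_filter, Finset.mem_univ, true_and] at this
      exact this
    have hkj' : k ≤ j' := Finset.le_max' _ k hkJ
    have htail : ∀ j : Fin H, (j' : ℕ) + 1 ≤ (j : ℕ) → ℓ j t' = 0 := by
      intro j hj
      by_contra h
      have hjpos : 0 < ℓ j t' := lt_of_le_of_ne (hpos j t') (Ne.symm h)
      have hjJ : j ∈ Jset := by simp [hJ, hjpos]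
      have := Finset.le_max' Jset j hjJ
      rw [← hj'] at this
      have : (j : ℕ) ≤ (j' : ℕ) := this
      omega
    have h1 : S H t' = S ((j' : ℕ) + 1) t' := Stail t' _ htail
    have hsub : Finset.Icc a (d k) ⊆ Finset.Icc a (d j') :=
      Finset.Icc_subset_Icc_right (hd_mono.monotone hkj')
    have h2 : g (S ((j' : ℕ) + 1) t') ≤ g (S ((j' : ℕ) + 1) t) :=
      exch j' t' t (hsub ht'mem) (hsub htmem) hj'pos
    have h3 : S ((j' : ℕ) + 1) t ≤ S H t := Smono t (by omega)
    calc g (S H t') = g (S ((j' : ℕ) + 1) t') := by rw [h1]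
      _ ≤ g (S ((j' : ℕ) + 1) t) := h2
      _ ≤ g (S H t) := gmono h3
  -- support witnesses
  have hwit : ∀ k : Fin H, ∃ t0, t0 ∈ Finset.Icc a (d k) ∧ 0 < ℓ k t0 := by
    intro k
    by_contra h
    push_neg at h
    have : ∑ t ∈ Finset.Icc a (d k), ℓ k t = 0 :=
      Finset.sum_eq_zero fun t ht => le_antisymm (h t ht) (hpos k t)
    rw [hsum k] at this
    exact absurd this (ne_of_gt (hL k))
  choose t0 ht0mem ht0pos using hwit
  set μ : Fin H → ℝ := fun k => g (S H (t0 k)) with hμ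
  have hgge : ∀ (k : Fin H), ∀ t ∈ Finset.Icc a (d k), μ k ≤ g (S H t) :=
    fun k t ht => core k t (t0 k) ht (ht0pos k)
  have hgeq : ∀ (k : Fin H) (t : ℕ), 0 < ℓ k t → g (S H t) = μ k := by
    intro k t hkt
    have htmem : t ∈ Finset.Icc a (d k) := by
      by_contra h
      rw [hsupp k t h] at hkt
      exact lt_irrefl _ hkt
    exact le_antisymm (core k (t0 k) t (ht0mem k) hkt) (hgge k t htmem)
  -- KKT-type inequality per class
  have key : ∀ k : Fin H, 0 ≤ ∑ t ∈ Finset.Icc a T, g (S H t) * (m k t - ℓ k t) := by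
    intro k
    have hIccsub : Finset.Icc a (d k) ⊆ Finset.Icc a T :=
      Finset.Icc_subset_Icc_right (hd_ub k)
    have hrestrict : ∑ t ∈ Finset.Icc a (d k), g (S H t) * (m k t - ℓ k t) =
        ∑ t ∈ Finset.Icc a T, g (S H t) * (m k t - ℓ k t) :=
      Finset.sum_subset hIccsub (fun t _ ht => by rw [hmsupp k t ht, hsupp k t ht]; ring)
    rw [← hrestrict]
    have e1 : ∑ t ∈ Finset.Icc a (d k), g (S H t) * ℓ k t = μ k * L k := by
      rw [← hsum k, Finset.mul_sum]
      apply Finset.sum_congr rfl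
      intro t _
      rcases eq_or_lt_of_le (hpos k t) with h | h
      · rw [← h]; ring
      · rw [hgeq k t h]
    have e2 : μ k * L k ≤ ∑ t ∈ Finset.Icc a (d k), g (S H t) * m k t := by
      rw [← hmsum k, Finset.mul_sum]
      apply Finset.sum_le_sum
      intro t ht
      exact mul_le_mul_of_nonneg_right (hgge k t ht) (hmpos k t)
    have e3 : ∑ t ∈ Finset.Icc a (d k), g (S H t) * (m k t - ℓ k t) =
        (∑ t ∈ Finset.Icc a (d k), g (S H t) * m k t) -
        ∑ t ∈ Finset.Icc a (d k), g (S H t) * ℓ k t := by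
      rw [← Finset.sum_sub_distrib]
      apply Finset.sum_congr rfl
      intro t _
      ring
    rw [e3, e1]
    linarith
  -- combine via gradient inequality
  have swap : ∑ k : Fin H, ∑ t ∈ Finset.Icc a T, g (S H t) * (m k t - ℓ k t) =
      ∑ t ∈ Finset.Icc a T, g (S H t) * ((ℓ0 t + ∑ k, m k t) - S H t) := by
    rw [Finset.sum_comm]
    apply Finset.sum_congr rfl
    intro t _
    have : ∑ k : Fin H, g (S H t) * (m k t - ℓ k t) =
        g (S H t) * ((∑ k, m k t) - ∑ k, ℓ k t) := by
      rw [mul_sub, Finset.mul_sum, Finset.mul_sum, ← Finset.sum_sub_distrib]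
      exact Finset.sum_congr rfl fun k _ => mul_sub _ _ _
    rw [this, SHtot t]
    ring_nf
  have final : ∀ t : ℕ, f (S H t) + g (S H t) * ((ℓ0 t + ∑ k, m k t) - S H t) ≤
      f (ℓ0 t + ∑ k, m k t) := by
    intro t
    have := grad_ineq hf_conv hf_diff (S H t) (ℓ0 t + ∑ k, m k t)
    linarith
  calc ∑ t ∈ Finset.Icc a T, f (ℓ0 t + ∑ k, ℓ k t)
      = ∑ t ∈ Finset.Icc a T, f (S H t) :=
        Finset.sum_congr rfl (fun t _ => by rw [SHtot t])
    _ ≤ (∑ t ∈ Finset.Icc a T, f (S H t)) +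
        ∑ k : Fin H, ∑ t ∈ Finset.Icc a T, g (S H t) * (m k t - ℓ k t) :=
        le_add_of_nonneg_right (Finset.sum_nonneg fun k _ => key k)
    _ = ∑ t ∈ Finset.Icc a T,
        (f (S H t) + g (S H t) * ((ℓ0 t + ∑ k, m k t) - S H t)) := by
        rw [swap, ← Finset.sum_add_distrib]
    _ ≤ ∑ t ∈ Finset.Icc a T, f (ℓ0 t + ∑ k, m k t) :=
        Finset.sum_le_sum (fun t _ => final t)
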